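/- With the notation of the construction, suppose for some s > T that α̃_{w(m+s)} − ξ_{m+s+1} > 0 and α̃_{w(m+s+1)} − ξ_{m+s+2} < 0. Write m+s+1 = ml + i with 1 ≤ i ≤ m. Then L(α; w(i), α_{w(i)} + 1 − nl) = ml − 1, i.e., the hook-length at node (w(i), α_{w(i)}+1−nl) equals l(mκ + n). -/

import Mathlib

/-- The rank function `r(α,i)` for a composition indexed by `1,…,N`. -/
def rnk (N : ℕ) (α : ℕ → ℕ) (i : ℕ) : ℕ :=
  ((Finset.Icc 1 N).filter fun j => α i < α j).card +
  ((Finset.Icc 1 i).filter fun j => α j = α i).card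

/-- The length `ℓ(α)`: largest index with a nonzero part. -/
def len (N : ℕ) (α : ℕ → ℕ) : ℕ :=
  ((Finset.Icc 1 N).filter fun j => α j ≠ 0).sup id

/-- The weight `|α| = Σ α_i`. -/
def wt (N : ℕ) (α : ℕ → ℕ) : ℕ := ∑ i ∈ Finset.Icc 1 N, α i

/-- The deformation `α̃_i = α_i - i·υ` with `υ = 1/(N+1)`. -/
def tilde (N : ℕ) (α : ℕ → ℕ) (i : ℕ) : ℚ := (α i : ℚ) - (i : ℚ) / ((N : ℚ) + 1)

/-- The leg-length `L(α;i,j)`. -/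
def leg (N : ℕ) (α : ℕ → ℕ) (i j : ℕ) : ℕ :=
  ((Finset.Icc 1 N).filter fun l => i < l ∧ j ≤ α l ∧ α l ≤ α i).card +
  ((Finset.Icc 1 N).filter fun l => l < i ∧ j ≤ α l + 1 ∧ α l + 1 ≤ α i).card

/-- The decreasing rearrangement `α⁺`: `α⁺_i = α_{w(i)}` where `w` inverts the rank. -/
def part (N : ℕ) (α : ℕ → ℕ) (i : ℕ) : ℕ :=
  ∑ j ∈ (Finset.Icc 1 N).filter (fun j => rnk N α j = i), α j

/-- Strict dominance order `α ≻ β`. -/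
def sdom (N : ℕ) (α β : ℕ → ℕ) : Prop :=
  (∃ i ∈ Finset.Icc 1 N, α i ≠ β i) ∧
  ∀ k, k ≤ N → ∑ j ∈ Finset.Icc 1 k, β j ≤ ∑ j ∈ Finset.Icc 1 k, α j

/-- The order `α ▷ β`. -/
def tri (N : ℕ) (α β : ℕ → ℕ) : Prop :=
  wt N α = wt N β ∧
  (sdom N (part N α) (part N β) ∨
    ((∀ i ∈ Finset.Icc 1 N, part N α i = part N β i) ∧ sdom N α β))

/-- `(α,β)` is a `(-n/m)`-critical pair. -/
def critical (N m n : ℕ) (α β : ℕ → ℕ) : Prop :=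
  tri N α β ∧ ∀ i ∈ Finset.Icc 1 N,
    ((rnk N β i : ℤ) - (rnk N α i : ℤ)) * (n : ℤ) = (m : ℤ) * ((α i : ℤ) - (β i : ℤ))


namespace SCH

open Finset

private lemma npos (N : ℕ) : (0:ℚ) < (N:ℚ) + 1 := by positivity

lemma tilde_eq_div (N : ℕ) (α : ℕ → ℕ) (x : ℕ) :
    tilde N α x = (((α x : ℤ) * ((N:ℤ)+1) - (x:ℤ) : ℤ) : ℚ) / ((N:ℚ)+1) := by
  have h : ((N:ℚ)+1) ≠ 0 := ne_of_gt (npos N)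
  rw [tilde, eq_div_iff h]
  push_cast
  field_simp

def isMul (N : ℕ) (q : ℚ) : Prop := ∃ z : ℤ, q = (z:ℚ) / ((N:ℚ)+1)

lemma isMul_tilde (N : ℕ) (α : ℕ → ℕ) (x : ℕ) : isMul N (tilde N α x) :=
  ⟨_, tilde_eq_div N α x⟩

lemma isMul_sub_int {N : ℕ} {q : ℚ} (h : isMul N q) (c : ℤ) : isMul N (q - (c:ℚ)) := by
  obtain ⟨z, rfl⟩ := h
  refine ⟨z - c*((N:ℤ)+1), ?_⟩
  have h : ((N:ℚ)+1) ≠ 0 := ne_of_gt (npos N)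
  push_cast
  field_simp

lemma qgap {N : ℕ} {a b : ℚ} (ha : isMul N a) (hb : isMul N b) (h : a < b) :
    a + 1/((N:ℚ)+1) ≤ b := by
  obtain ⟨z1, rfl⟩ := ha
  obtain ⟨z2, rfl⟩ := hb
  have hp := npos N
  have h1 : (z1:ℚ) < z2 := by
    have := (div_lt_div_iff₀ hp hp).mp h
    exact lt_of_mul_lt_mul_right this (le_of_lt hp)
  have h2 : z1 + 1 ≤ z2 := by exact_mod_cast h1
  rw [← add_div]
  gcongr
  exact_mod_cast h2


lemma tilde_le_iff {N : ℕ} (α : ℕ → ℕ) {x y : ℕ} (hx : x ∈ Finset.Icc 1 N)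
    (hy : y ∈ Finset.Icc 1 N) :
    tilde N α x ≤ tilde N α y ↔ (α x < α y ∨ (α y = α x ∧ y ≤ x)) := by
  simp only [Finset.mem_Icc] at hx hy
  have hx1 : (1:ℤ) ≤ (x:ℤ) := by exact_mod_cast hx.1
  have hx2 : (x:ℤ) ≤ (N:ℤ) := by exact_mod_cast hx.2
  have hy1 : (1:ℤ) ≤ (y:ℤ) := by exact_mod_cast hy.1
  have hy2 : (y:ℤ) ≤ (N:ℤ) := by exact_mod_cast hy.2
  rw [tilde_eq_div, tilde_eq_div, div_le_div_iff_of_pos_right (npos N), Int.cast_le]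
  constructor
  · intro h
    rcases lt_trichotomy (α x) (α y) with h1 | h1 | h1
    · exact Or.inl h1
    · refine Or.inr ⟨h1.symm, ?_⟩
      have e : (α x:ℤ) = (α y:ℤ) := by exact_mod_cast h1
      have : (y:ℤ) ≤ (x:ℤ) := by nlinarith
      exact_mod_cast this
    · exfalso
      have hd : (α y:ℤ) + 1 ≤ (α x:ℤ) := by exact_mod_cast h1
      nlinarith
  · rintro (h1 | ⟨h1, h2⟩)
    · have hd : (α x:ℤ) + 1 ≤ (α y:ℤ) := by exact_mod_cast h1
      nlinarith
    · have e : (α y:ℤ) = (α x:ℤ) := by exact_mod_cast h1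
      have h2' : (y:ℤ) ≤ (x:ℤ) := by exact_mod_cast h2
      nlinarith

lemma tilde_inj {N : ℕ} (α : ℕ → ℕ) {x y : ℕ} (hx : x ∈ Finset.Icc 1 N)
    (hy : y ∈ Finset.Icc 1 N) (h : tilde N α x = tilde N α y) : x = y := by
  have h1 := (tilde_le_iff α hx hy).mp h.le
  have h2 := (tilde_le_iff α hy hx).mp h.ge
  omega


lemma endpoint_eq (N : ℕ) (x j : ℕ) :
    (j:ℚ) - 1 - (x:ℚ)/((N:ℚ)+1)
      = ((((j:ℤ)-1) * ((N:ℤ)+1) - (x:ℤ) : ℤ) : ℚ) / ((N:ℚ)+1) := by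
  have h : ((N:ℚ)+1) ≠ 0 := ne_of_gt (npos N)
  push_cast
  field_simp

lemma endpoint_lt_tilde_iff {N : ℕ} (α : ℕ → ℕ) {x y : ℕ} (j : ℕ)
    (hx : x ∈ Finset.Icc 1 N) (hy : y ∈ Finset.Icc 1 N) :
    ((j:ℚ) - 1 - (x:ℚ)/((N:ℚ)+1) < tilde N α y) ↔
      (if x ≤ y then j ≤ α y else j ≤ α y + 1) := by
  simp only [Finset.mem_Icc] at hx hy
  have hx1 : (1:ℤ) ≤ (x:ℤ) := by exact_mod_cast hx.1
  have hx2 : (x:ℤ) ≤ (N:ℤ) := by exact_mod_cast hx.2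
  have hy1 : (1:ℤ) ≤ (y:ℤ) := by exact_mod_cast hy.1
  have hy2 : (y:ℤ) ≤ (N:ℤ) := by exact_mod_cast hy.2
  rw [endpoint_eq, tilde_eq_div, div_lt_div_iff_of_pos_right (npos N), Int.cast_lt]
  split_ifs with hxy
  · have hxy' : (x:ℤ) ≤ (y:ℤ) := by exact_mod_cast hxy
    constructor
    · intro h
      by_contra hc
      have hc0 : α y + 1 ≤ j := by omega
      have hc' : (α y : ℤ) + 1 ≤ (j:ℤ) := by exact_mod_cast hc0
      nlinarith
    · intro h
      have h' : (j:ℤ) ≤ (α y:ℤ) := by exact_mod_cast h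
      nlinarith
  · have hxy' : (y:ℤ) < (x:ℤ) := by
      have : y < x := by omega
      exact_mod_cast this
    constructor
    · intro h
      by_contra hc
      have hc' : (α y : ℤ) ≤ (j:ℤ) - 2 := by
        have : (α y:ℤ) + 2 ≤ (j:ℤ) := by exact_mod_cast (by omega : α y + 2 ≤ j)
        omega
      nlinarith
    · intro h
      have h' : (j:ℤ) ≤ (α y:ℤ) + 1 := by exact_mod_cast h
      nlinarith


lemma rnkChar {N : ℕ} (α : ℕ → ℕ) {x : ℕ} (hx : x ∈ Finset.Icc 1 N) :
    rnk N α x = ((Finset.Icc 1 N).filter fun y => tilde N α x ≤ tilde N α y).card := by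
  classical
  simp only [Finset.mem_Icc] at hx
  have hsplit : ((Finset.Icc 1 N).filter fun y => tilde N α x ≤ tilde N α y)
      = ((Finset.Icc 1 N).filter fun y => α x < α y)
        ∪ ((Finset.Icc 1 N).filter fun y => α y = α x ∧ y ≤ x) := by
    ext y
    simp only [Finset.mem_filter, Finset.mem_union, Finset.mem_Icc]
    constructor
    · rintro ⟨hyI, h⟩
      have := (tilde_le_iff α (Finset.mem_Icc.mpr hx) (Finset.mem_Icc.mpr hyI)).mp h
      tauto
    · rintro (⟨hyI, h⟩ | ⟨hyI, h⟩) <;>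
        exact ⟨hyI, (tilde_le_iff α (Finset.mem_Icc.mpr hx) (Finset.mem_Icc.mpr hyI)).mpr
          (by tauto)⟩
  have hdisj : Disjoint ((Finset.Icc 1 N).filter fun y => α x < α y)
      ((Finset.Icc 1 N).filter fun y => α y = α x ∧ y ≤ x) := by
    rw [Finset.disjoint_left]
    intro a ha hb
    simp only [Finset.mem_filter] at ha hb
    omega
  have hsecond : ((Finset.Icc 1 x).filter fun j => α j = α x)
      = ((Finset.Icc 1 N).filter fun y => α y = α x ∧ y ≤ x) := by
    ext a
    simp only [Finset.mem_filter, Finset.mem_Icc]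
    constructor
    · rintro ⟨⟨h1, h2⟩, h3⟩
      exact ⟨⟨h1, h2.trans hx.2⟩, h3, h2⟩
    · rintro ⟨⟨h1, _⟩, h3, h4⟩
      exact ⟨⟨h1, h4⟩, h3⟩
  rw [hsplit, Finset.card_union_of_disjoint hdisj, rnk, hsecond]

lemma rnk_le {N : ℕ} (α : ℕ → ℕ) {x : ℕ} (hx : x ∈ Finset.Icc 1 N) :
    rnk N α x ≤ N := by
  rw [rnkChar α hx]
  calc ((Finset.Icc 1 N).filter fun y => tilde N α x ≤ tilde N α y).card
      ≤ (Finset.Icc 1 N).card := Finset.card_filter_le _ _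
    _ = N := by rw [Nat.card_Icc]; omega

lemma rnk_pos {N : ℕ} (α : ℕ → ℕ) {x : ℕ} (hx : x ∈ Finset.Icc 1 N) :
    1 ≤ rnk N α x := by
  rw [rnkChar α hx]
  refine Finset.card_pos.mpr ⟨x, ?_⟩
  simp [Finset.mem_filter, hx, le_refl]

lemma rnk_lt_of_tilde_lt {N : ℕ} (α : ℕ → ℕ) {x y : ℕ} (hx : x ∈ Finset.Icc 1 N)
    (hy : y ∈ Finset.Icc 1 N) (h : tilde N α x < tilde N α y) :
    rnk N α y < rnk N α x := by
  classical
  rw [rnkChar α hx, rnkChar α hy]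
  apply Finset.card_lt_card
  rw [Finset.ssubset_iff_of_subset]
  · exact ⟨x, by simp [Finset.mem_filter, hx, not_le.mpr h]⟩
  · intro a ha
    simp only [Finset.mem_filter] at ha ⊢
    exact ⟨ha.1, h.le.trans ha.2⟩

lemma rnk_inj {N : ℕ} (α : ℕ → ℕ) {x y : ℕ} (hx : x ∈ Finset.Icc 1 N)
    (hy : y ∈ Finset.Icc 1 N) (h : rnk N α x = rnk N α y) : x = y := by
  rcases lt_trichotomy (tilde N α x) (tilde N α y) with h1 | h1 | h1
  · exact absurd h (rnk_lt_of_tilde_lt α hx hy h1).ne'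
  · exact tilde_inj α hx hy h1
  · exact absurd h (rnk_lt_of_tilde_lt α hy hx h1).ne

lemma rnk_id_of_gt {N : ℕ} (α : ℕ → ℕ) (hsupp : ∀ i, N < i → α i = 0) {x : ℕ}
    (hx : N < x) : rnk N α x = x := by
  classical
  have hαx : α x = 0 := hsupp x hx
  rw [rnk, hαx]
  have h1 : ((Finset.Icc 1 N).filter fun j => 0 < α j)
      = ((Finset.Icc 1 N).filter fun j => ¬ α j = 0) := by
    apply Finset.filter_congr
    intro a _
    simp [Nat.pos_iff_ne_zero]
  have h2 : ((Finset.Icc 1 x).filter fun j => α j = 0)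
      = ((Finset.Icc 1 N).filter fun j => α j = 0) ∪ Finset.Icc (N+1) x := by
    ext a
    simp only [Finset.mem_filter, Finset.mem_union, Finset.mem_Icc]
    constructor
    · rintro ⟨⟨ha1, ha2⟩, ha3⟩
      rcases le_or_gt a N with h | h
      · exact Or.inl ⟨⟨ha1, h⟩, ha3⟩
      · exact Or.inr ⟨h, ha2⟩
    · rintro (⟨⟨ha1, ha2⟩, ha3⟩ | ⟨ha1, ha2⟩)
      · exact ⟨⟨ha1, ha2.trans hx.le⟩, ha3⟩
      · exact ⟨⟨by omega, ha2⟩, hsupp a (by omega)⟩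
  have hdisj : Disjoint ((Finset.Icc 1 N).filter fun j => α j = 0)
      (Finset.Icc (N+1) x) := by
    rw [Finset.disjoint_left]
    intro a ha hb
    simp only [Finset.mem_filter, Finset.mem_Icc] at ha hb
    omega
  rw [h1, h2, Finset.card_union_of_disjoint hdisj]
  have h3 := Finset.card_filter_add_card_filter_not
    (s := Finset.Icc 1 N) (p := fun j => α j = 0)
  simp only [Nat.card_Icc] at h3 ⊢
  omega


section W
variable {N : ℕ} {α : ℕ → ℕ} {w : ℕ → ℕ}
  (hsupp : ∀ i, N < i → α i = 0)
  (hw : ∀ i, 1 ≤ i → 1 ≤ w i ∧ rnk N α (w i) = i)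

include hsupp hw

lemma w_mem {p : ℕ} (hp1 : 1 ≤ p) (hpN : p ≤ N) : w p ∈ Finset.Icc 1 N := by
  obtain ⟨h1, h2⟩ := hw p hp1
  rw [Finset.mem_Icc]
  refine ⟨h1, ?_⟩
  by_contra hc
  push_neg at hc
  rw [rnk_id_of_gt α hsupp hc] at h2
  omega

lemma w_id_of_gt {p : ℕ} (hp : N < p) : w p = p := by
  obtain ⟨h1, h2⟩ := hw p (by omega)
  rcases le_or_gt (w p) N with h | h
  · have := rnk_le α (Finset.mem_Icc.mpr ⟨h1, h⟩)
    omega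
  · rw [rnk_id_of_gt α hsupp h] at h2
    exact h2

lemma w_rnk {x : ℕ} (hx : x ∈ Finset.Icc 1 N) : w (rnk N α x) = x := by
  have hp1 : 1 ≤ rnk N α x := rnk_pos α hx
  have hpN : rnk N α x ≤ N := rnk_le α hx
  obtain ⟨h1, h2⟩ := hw (rnk N α x) hp1
  exact rnk_inj α (w_mem hsupp hw hp1 hpN) hx h2

lemma rho_anti {p q : ℕ} (hp : 1 ≤ p) (hpq : p < q) :
    tilde N α (w q) < tilde N α (w p) := by
  rcases le_or_gt q N with hq | hq
  · have hwp := w_mem hsupp hw hp (by omega)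
    have hwq := w_mem hsupp hw (by omega) hq
    by_contra hc
    push_neg at hc
    rcases lt_or_eq_of_le hc with h | h
    · have := rnk_lt_of_tilde_lt α hwp hwq h
      rw [(hw p hp).2, (hw q (by omega)).2] at this
      omega
    · have := tilde_inj α hwp hwq h
      have e1 := (hw p hp).2
      have e2 := (hw q (by omega)).2
      rw [this] at e1
      omega
  · rw [w_id_of_gt hsupp hw hq]
    have hq0 : α q = 0 := hsupp q hq
    have hb : tilde N α q = -(q:ℚ)/((N:ℚ)+1) := by
      rw [tilde, hq0]
      push_cast
      ring
    rcases le_or_gt p N with hpN | hpN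
    · have hwp := w_mem hsupp hw hp hpN
      simp only [Finset.mem_Icc] at hwp
      have h1 : (0:ℚ) ≤ (α (w p) : ℚ) := by positivity
      have h2 : (w p : ℚ) ≤ (N:ℚ) := by exact_mod_cast hwp.2
      have h3 : ((N:ℚ)+1) ≤ (q:ℚ) := by exact_mod_cast hq
      have l1 : -(q:ℚ)/((N:ℚ)+1) < -(N:ℚ)/((N:ℚ)+1) := by
        rw [div_lt_div_iff_of_pos_right (npos N)]; linarith
      have l2 : -(N:ℚ)/((N:ℚ)+1) ≤ -((w p : ℕ):ℚ)/((N:ℚ)+1) := by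
        rw [div_le_div_iff_of_pos_right (npos N)]; linarith
      rw [hb, tilde]
      have : -((w p : ℕ):ℚ)/((N:ℚ)+1) = 0 - ((w p : ℕ):ℚ)/((N:ℚ)+1) := by ring
      linarith [this]
    · rw [w_id_of_gt hsupp hw hpN]
      have hp0 : α p = 0 := hsupp p hpN
      have hb2 : tilde N α p = -(p:ℚ)/((N:ℚ)+1) := by
        rw [tilde, hp0]; push_cast; ring
      rw [hb, hb2, div_lt_div_iff_of_pos_right (npos N)]
      have : (p:ℚ) < (q:ℚ) := by exact_mod_cast hpq
      linarith

end W

lemma legChar {N : ℕ} (α : ℕ → ℕ) {x : ℕ} (hx : x ∈ Finset.Icc 1 N) (j : ℕ) :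
    leg N α x j = ((Finset.Icc 1 N).filter fun y =>
      (j:ℚ) - 1 - (x:ℚ)/((N:ℚ)+1) < tilde N α y ∧ tilde N α y < tilde N α x).card := by
  classical
  have hset : ((Finset.Icc 1 N).filter fun y =>
        (j:ℚ) - 1 - (x:ℚ)/((N:ℚ)+1) < tilde N α y ∧ tilde N α y < tilde N α x)
      = ((Finset.Icc 1 N).filter fun l => x < l ∧ j ≤ α l ∧ α l ≤ α x)
        ∪ ((Finset.Icc 1 N).filter fun l => l < x ∧ j ≤ α l + 1 ∧ α l + 1 ≤ α x) := by
    ext y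
    simp only [Finset.mem_filter, Finset.mem_union]
    constructor
    · rintro ⟨hyI, h1, h2⟩
      rw [endpoint_lt_tilde_iff α j hx hyI] at h1
      have h2' : ¬ (α x < α y ∨ (α y = α x ∧ y ≤ x)) := by
        rw [← tilde_le_iff α hx hyI]
        exact not_le.mpr h2
      have hne : y ≠ x := by
        intro e
        rw [e] at h2
        exact lt_irrefl _ h2
      split_ifs at h1 with hxy
      · refine Or.inl ⟨hyI, ?_⟩
        omega
      · refine Or.inr ⟨hyI, ?_⟩
        omega
    · rintro (⟨hyI, hc⟩ | ⟨hyI, hc⟩) <;>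
      · refine ⟨hyI, ?_, ?_⟩
        · rw [endpoint_lt_tilde_iff α j hx hyI]
          split_ifs with hxy <;> omega
        · rw [← not_le, tilde_le_iff α hx hyI]
          omega
  have hdisj : Disjoint ((Finset.Icc 1 N).filter fun l => x < l ∧ j ≤ α l ∧ α l ≤ α x)
      ((Finset.Icc 1 N).filter fun l => l < x ∧ j ≤ α l + 1 ∧ α l + 1 ≤ α x) := by
    rw [Finset.disjoint_left]
    intro a ha hb
    simp only [Finset.mem_filter] at ha hb
    omega
  rw [hset, Finset.card_union_of_disjoint hdisj, leg]

lemma leg_bound {N : ℕ} (α : ℕ → ℕ) {x : ℕ} (hx : x ∈ Finset.Icc 1 N) (j : ℕ) :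
    leg N α x j + 1 ≤ N := by
  classical
  have h1 : ((Finset.Icc 1 N).filter fun y =>
      (j:ℚ) - 1 - (x:ℚ)/((N:ℚ)+1) < tilde N α y ∧ tilde N α y < tilde N α x)
      ⊆ (Finset.Icc 1 N).erase x := by
    intro a ha
    simp only [Finset.mem_filter] at ha
    refine Finset.mem_erase.mpr ⟨?_, ha.1⟩
    intro hax
    rw [hax] at ha
    exact lt_irrefl _ ha.2.2
  have h2 := Finset.card_le_card h1
  rw [Finset.card_erase_of_mem hx, Nat.card_Icc] at h2
  rw [legChar α hx j]
  simp only [Finset.mem_Icc] at hx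
  omega

lemma transfer {N : ℕ} {α : ℕ → ℕ} {w : ℕ → ℕ}
    (hsupp : ∀ i, N < i → α i = 0)
    (hw : ∀ i, 1 ≤ i → 1 ≤ w i ∧ rnk N α (w i) = i)
    (P : ℚ → Prop) [DecidablePred P] :
    ((Finset.Icc 1 N).filter fun y => P (tilde N α y)).card
      = ((Finset.Icc 1 N).filter fun p => P (tilde N α (w p))).card := by
  apply Finset.card_bij' (i := fun y _ => rnk N α y) (j := fun p _ => w p)
  · intro y hy
    simp only [Finset.mem_filter] at hy ⊢
    refine ⟨Finset.mem_Icc.mpr ⟨rnk_pos α hy.1, rnk_le α hy.1⟩, ?_⟩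
    rw [w_rnk hsupp hw hy.1]
    exact hy.2
  · intro p hp
    simp only [Finset.mem_filter, Finset.mem_Icc] at hp ⊢
    refine ⟨Finset.mem_Icc.mp (w_mem hsupp hw hp.1.1 hp.1.2) |>.1 |> fun h =>
      Finset.mem_Icc.mpr (Finset.mem_Icc.mp (w_mem hsupp hw hp.1.1 hp.1.2)) |> Finset.mem_Icc.mp, hp.2⟩
  · intro y hy
    simp only [Finset.mem_filter] at hy
    exact w_rnk hsupp hw hy.1
  · intro p hp
    simp only [Finset.mem_filter, Finset.mem_Icc] at hp
    exact (hw p hp.1.1).2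


lemma isMul_tilde_sub (N : ℕ) (α : ℕ → ℕ) (x n' k : ℕ) :
    isMul N (tilde N α x - (n':ℚ) * (k:ℚ)) := by
  have h := isMul_sub_int (isMul_tilde N α x) ((n' * k : ℕ) : ℤ)
  have e : ((((n' * k : ℕ) : ℤ)):ℚ) = (n':ℚ) * (k:ℚ) := by push_cast; ring
  rwa [e] at h

end SCH


/-- a sign change of `(α̃_{w(m+s)} - ξ_{m+s+1})_s` beyond `T` locates a
hook-length divisible by `mκ + n`: writing `m+s+1 = ml+i` with `1 ≤ i ≤ m`, the
leg-length at the node `(w(i), α_{w(i)}+1-nl)` is `ml - 1` (so the hook-length there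
equals `l(mκ+n)`). -/
theorem sign_change_hook (N : ℕ) (α : ℕ → ℕ) (w : ℕ → ℕ) (m n T s l i : ℕ) (ξ : ℕ → ℚ)
    (hN : 1 ≤ N)
    (hNfull : N = len N α + wt N α)
    (hsupp : ∀ i, N < i → α i = 0)
    (hw : ∀ i, 1 ≤ i → 1 ≤ w i ∧ rnk N α (w i) = i)
    (hn1 : 1 ≤ n) (hn2 : n ≤ α (w 1))
    (hm : leg N α (w 1) (α (w 1) + 1 - n) + 1 = m)
    (hξ : ∀ k i, 1 ≤ i → i ≤ m → ξ (m * k + i) = tilde N α (w i) - (n : ℚ) * k)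
    (hT1 : 1 ≤ T)
    (hT2 : ∀ s', 1 ≤ s' → s' < T → tilde N α (w (m + s')) < ξ (m + s' + 1))
    (hT3 : ξ (m + T + 1) < tilde N α (w (m + T)))
    (hs : T < s)
    (hpos : 0 < tilde N α (w (m + s)) - ξ (m + s + 1))
    (hneg : tilde N α (w (m + s + 1)) - ξ (m + s + 2) < 0)
    (hi1 : 1 ≤ i) (him : i ≤ m) (hli : m + s + 1 = m * l + i) :
    ∀ j : ℕ, (j : ℤ) = (α (w i) : ℤ) + 1 - (n : ℤ) * l →
      (leg N α (w i) j : ℤ) = (m : ℤ) * l - 1 := by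
  classical
  intro j hj
  have hm1 : 1 ≤ m := by omega
  have hs2 : 2 ≤ s := by omega
  have hl1 : 1 ≤ l := by
    rcases Nat.eq_zero_or_pos l with h | h
    · exfalso
      rw [h, Nat.mul_zero, Nat.zero_add] at hli
      omega
    · exact h
  have hanti : ∀ p q : ℕ, 1 ≤ p → p < q → tilde N α (w q) < tilde N α (w p) :=
    fun p q hp hpq => SCH.rho_anti hsupp hw hp hpq
  have hantile : ∀ p q : ℕ, 1 ≤ p → p ≤ q → tilde N α (w q) ≤ tilde N α (w p) := by
    intro p q hp hpq
    rcases eq_or_lt_of_le hpq with h | h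
    · rw [h]
    · exact (hanti p q hp h).le
  have hw1mem : w 1 ∈ Finset.Icc 1 N := SCH.w_mem hsupp hw le_rfl hN
  have hmN : m ≤ N := by
    have := SCH.leg_bound α hw1mem (α (w 1) + 1 - n)
    omega
  have hξ1 : ξ (m + s + 1) = tilde N α (w i) - (n:ℚ) * l := by
    rw [hli]; exact hξ l i hi1 him
  have hpos' : tilde N α (w i) - (n:ℚ)*l < tilde N α (w (m+s)) := by
    rw [hξ1] at hpos; linarith
  -- the key property of m
  have claim_tw : tilde N α (w 1) - (n:ℚ) < tilde N α (w m) := by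
    rcases eq_or_lt_of_le hm1 with h1 | h1
    · rw [← h1]
      have : (1:ℚ) ≤ (n:ℚ) := by exact_mod_cast hn1
      linarith
    · set j0 := α (w 1) + 1 - n with hj0def
      have hj0 : (j0:ℚ) = (α (w 1):ℚ) + 1 - (n:ℚ) := by
        have h' : (j0:ℤ) = (α (w 1):ℤ) + 1 - (n:ℤ) := by omega
        exact_mod_cast h'
      have hend : (j0:ℚ) - 1 - ((w 1 : ℕ):ℚ)/((N:ℚ)+1) = tilde N α (w 1) - (n:ℚ) := by
        rw [hj0, tilde]; ring
      have hcard : leg N α (w 1) j0 = ((Finset.Icc 1 N).filter fun p =>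
          tilde N α (w 1) - (n:ℚ) < tilde N α (w p) ∧ tilde N α (w p) < tilde N α (w 1)).card := by
        rw [SCH.legChar α hw1mem j0]
        simp only [hend]
        exact SCH.transfer hsupp hw (fun t => tilde N α (w 1) - (n:ℚ) < t ∧ t < tilde N α (w 1))
      by_contra hc
      push_neg at hc
      have hsub : ((Finset.Icc 1 N).filter fun p =>
          tilde N α (w 1) - (n:ℚ) < tilde N α (w p) ∧ tilde N α (w p) < tilde N α (w 1))
          ⊆ Finset.Icc 2 (m - 1) := by
        intro p hp
        simp only [Finset.mem_filter, Finset.mem_Icc] at hp ⊢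
        obtain ⟨⟨hp1, hpN⟩, hlow, hup⟩ := hp
        constructor
        · rcases eq_or_lt_of_le hp1 with h | h
          · exfalso; rw [← h] at hup; exact lt_irrefl _ hup
          · omega
        · by_contra hcp
          push_neg at hcp
          have : tilde N α (w p) ≤ tilde N α (w m) := hantile m p hm1 (by omega)
          linarith
      have hcle := Finset.card_le_card hsub
      rw [← hcard, Nat.card_Icc] at hcle
      omega
  -- ξ for index m+s+2
  obtain ⟨ξ2, hξ2eq, hξ2lt, hξ2mul⟩ :
      ∃ q : ℚ, ξ (m+s+2) = q ∧ q < tilde N α (w i) - (n:ℚ)*l ∧ SCH.isMul N q := by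
    rcases eq_or_lt_of_le him with hieq | hilt
    · refine ⟨tilde N α (w 1) - (n:ℚ)*((l+1 : ℕ):ℚ), ?_, ?_, ?_⟩
      · have e2 : m * (l + 1) + 1 = m + s + 2 := by
          have e0 : m * (l+1) + 1 = m * l + i + 1 := by rw [Nat.mul_succ, hieq]
          rw [e0, ← hli]
        rw [← e2]
        exact hξ (l+1) 1 le_rfl hm1
      · rw [hieq]
        push_cast
        linarith [claim_tw]
      · exact SCH.isMul_tilde_sub N α (w 1) n (l+1)
    · refine ⟨tilde N α (w (i+1)) - (n:ℚ)*(l:ℚ), ?_, ?_, ?_⟩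
      · have e2 : m * l + (i + 1) = m + s + 2 := by
          rw [← Nat.add_assoc, ← hli]
        rw [← e2]
        exact hξ l (i+1) (by omega) (by omega)
      · have := hanti i (i+1) hi1 (Nat.lt_succ_self i)
        linarith
      · exact SCH.isMul_tilde_sub N α (w (i+1)) n l
  have hgap : ξ2 + 1/((N:ℚ)+1) ≤ tilde N α (w i) - (n:ℚ)*l :=
    SCH.qgap hξ2mul (SCH.isMul_tilde_sub N α (w i) n l) hξ2lt
  have hneg' : tilde N α (w (m+s+1)) < ξ2 := by
    rw [hξ2eq] at hneg; linarith
  -- m + s ≤ N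
  have hmsN : m + s ≤ N := by
    by_contra hc
    push_neg at hc
    have hid1 : w (m+s) = m+s := SCH.w_id_of_gt hsupp hw hc
    have hid2 : w (m+s+1) = m+s+1 := SCH.w_id_of_gt hsupp hw (by omega)
    have hz1 : α (m+s) = 0 := hsupp _ hc
    have hz2 : α (m+s+1) = 0 := hsupp _ (by omega)
    have e1 : tilde N α (w (m+s)) = -((m+s : ℕ):ℚ)/((N:ℚ)+1) := by
      rw [hid1, tilde, hz1]; push_cast; ring
    have e2 : tilde N α (w (m+s+1)) = -((m+s+1 : ℕ):ℚ)/((N:ℚ)+1) := by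
      rw [hid2, tilde, hz2]; push_cast; ring
    have e3 : -((m+s:ℕ):ℚ)/((N:ℚ)+1) = -((m+s+1:ℕ):ℚ)/((N:ℚ)+1) + 1/((N:ℚ)+1) := by
      rw [← add_div]
      have e4 : (-((m+s:ℕ):ℚ)) = -((m+s+1:ℕ):ℚ) + 1 := by push_cast; ring
      rw [e4]
    rw [e2] at hneg'
    rw [e1] at hpos'
    linarith [hgap, hneg', hpos']
  -- the main count
  have hiN : i ≤ N := by omega
  have hwi : w i ∈ Finset.Icc 1 N := SCH.w_mem hsupp hw hi1 hiN
  have hjq : (j:ℚ) - 1 - ((w i : ℕ):ℚ)/((N:ℚ)+1) = tilde N α (w i) - (n:ℚ)*l := by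
    have hj' : (j:ℚ) = (α (w i):ℚ) + 1 - (n:ℚ)*(l:ℚ) := by exact_mod_cast hj
    rw [hj', tilde]; ring
  have hup0 : (0:ℚ) < 1/((N:ℚ)+1) := by positivity
  have hcard : leg N α (w i) j = ((Finset.Icc 1 N).filter fun p =>
      tilde N α (w i) - (n:ℚ)*l < tilde N α (w p) ∧ tilde N α (w p) < tilde N α (w i)).card := by
    rw [SCH.legChar α hwi j]
    simp only [hjq]
    exact SCH.transfer hsupp hw (fun t => tilde N α (w i) - (n:ℚ)*l < t ∧ t < tilde N α (w i))
  have hseteq : ((Finset.Icc 1 N).filter fun p =>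
      tilde N α (w i) - (n:ℚ)*l < tilde N α (w p) ∧ tilde N α (w p) < tilde N α (w i))
      = Finset.Icc (i+1) (m+s) := by
    ext p
    simp only [Finset.mem_filter, Finset.mem_Icc]
    constructor
    · rintro ⟨⟨hp1, hpN⟩, hlow, hup⟩
      constructor
      · by_contra hcp
        push_neg at hcp
        rcases eq_or_lt_of_le (by omega : p ≤ i) with h | h
        · rw [h] at hup; exact lt_irrefl _ hup
        · exact absurd hup (not_lt.mpr (hanti p i hp1 h).le)
      · by_contra hcp
        push_neg at hcp
        have h1 : tilde N α (w p) ≤ tilde N α (w (m+s+1)) :=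
          hantile (m+s+1) p (by omega) (by omega)
        linarith [hneg', hgap]
    · rintro ⟨hp1, hp2⟩
      refine ⟨⟨by omega, by omega⟩, ?_, ?_⟩
      · have := hantile p (m+s) (by omega) hp2
        linarith [hpos']
      · exact hanti i p hi1 (by omega)
  rw [hseteq, Nat.card_Icc] at hcard
  have hcast : (m:ℤ) * (l:ℤ) + (i:ℤ) = (m:ℤ) + s + 1 := by exact_mod_cast hli.symm
  rw [hcard]
  rw [Nat.cast_sub (by omega : i + 1 ≤ m + s + 1)]
  push_cast
  linarith [hcast]
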